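/- arXiv:2506.17139 — 2 statements merged into one kernel-verified Lean document; each statement's English description precedes it below -/
import Mathlib

section
/- Let s : ℝ^D → ℝ^D be a continuously differentiable vector field such that s and its Jacobian grow at most polynomially, and let v ~ N(0, σ²I) be a Gaussian random vector with σ > 0. Then E_v[div s(x + v)] = E_v[(vᵀ s(x + v)) / σ²] for every x ∈ ℝ^D. -/
open MeasureTheory Real ProbabilityTheory
open scoped ENNReal NNReal

/-- Divergence of a vector field on `ℝ^D`. -/
noncomputable def divg {D : ℕ} (s : (Fin D → ℝ) → (Fin D → ℝ)) (y : Fin D → ℝ) : ℝ :=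
  ∑ i, fderiv ℝ (fun z => s z i) y (Pi.single i 1)


lemma lintegral_pi_prod {n : ℕ} (μ : Measure ℝ) [SigmaFinite μ] (f : Fin n → ℝ → ℝ≥0∞)
    (hf : ∀ i, Measurable (f i)) :
    ∫⁻ x, ∏ i, f i (x i) ∂(Measure.pi fun _ : Fin n => μ) = ∏ i, ∫⁻ t, f i t ∂μ := by
  induction n with
  | zero => simp [lintegral_const]
  | succ n ih =>
      have h := (measurePreserving_piFinSuccAbove (fun _ : Fin (n+1) => μ) 0).symm
      rw [← h.lintegral_comp_emb (MeasurableEquiv.measurableEmbedding _)]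
      simp only [MeasurableEquiv.piFinSuccAbove_symm_apply, Fin.insertNthEquiv,
        Fin.prod_univ_succ, Fin.insertNth_zero, Fin.zero_succAbove, Equiv.coe_fn_mk,
        Fin.cons_zero, Fin.cons_succ, Function.comp_def, cast_eq]
      rw [lintegral_prod_mul (f := f 0) (g := fun y : Fin n → ℝ => ∏ x : Fin n, f x.succ (y x))
        (hf 0).aemeasurable
        (Finset.measurable_prod Finset.univ
          (fun i _ => (hf i.succ).comp (measurable_pi_apply i))).aemeasurable,
        ih (fun i => f i.succ) (fun i => hf i.succ)]

lemma pi_gaussian (D : ℕ) (m : ℝ) (V : ℝ≥0) (hV : V ≠ 0) :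
    Measure.pi (fun _ : Fin D => gaussianReal m V)
      = (volume : Measure (Fin D → ℝ)).withDensity (fun v => ∏ i, gaussianPDF m V (v i)) := by
  refine (Measure.pi_eq (μ := fun _ : Fin D => gaussianReal m V) fun s hs => ?_)
  rw [withDensity_apply _ (MeasurableSet.univ_pi hs), ← lintegral_indicator
    (MeasurableSet.univ_pi hs) _]
  have : (Set.univ.pi s).indicator (fun v : Fin D → ℝ => ∏ i, gaussianPDF m V (v i))
      = fun v => ∏ i, (s i).indicator (gaussianPDF m V) (v i) := by
    funext v
    by_cases h : v ∈ Set.univ.pi s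
    · rw [Set.indicator_of_mem h]
      exact (Finset.prod_congr rfl fun i _ =>
        (Set.indicator_of_mem (h i (Set.mem_univ i)) _).symm)
    · rw [Set.indicator_of_notMem h]
      obtain ⟨i, hi⟩ : ∃ i, v i ∉ s i := by
        by_contra hc
        push_neg at hc
        exact h fun i _ => hc i
      exact (Finset.prod_eq_zero (Finset.mem_univ i)
        (by rw [Set.indicator_of_notMem hi])).symm
  rw [this, volume_pi, lintegral_pi_prod _ _
    (fun i => (measurable_gaussianPDF m V).indicator (hs i))]
  exact Finset.prod_congr rfl fun i _ => by
    rw [lintegral_indicator (hs i) _, ← gaussianReal_apply m (v := V) hV (s i)]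

lemma integral_pi_gaussian {D : ℕ} (m : ℝ) (V : ℝ≥0) (hV : V ≠ 0) (g : (Fin D → ℝ) → ℝ) :
    ∫ v, g v ∂(Measure.pi fun _ : Fin D => gaussianReal m V)
      = ∫ v, (∏ i, gaussianPDFReal m V (v i)) * g v := by
  rw [pi_gaussian D m V hV]
  have hd : Measurable (fun v : Fin D → ℝ =>
      Real.toNNReal (∏ i, gaussianPDFReal m V (v i))) :=
    (Finset.measurable_prod _ fun i _ =>
      (measurable_gaussianPDFReal m V).comp (measurable_pi_apply i)).real_toNNReal
  have hde : (fun v : Fin D → ℝ => ∏ i, gaussianPDF m V (v i))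
      = fun v => ((Real.toNNReal (∏ i, gaussianPDFReal m V (v i)) : ℝ≥0) : ℝ≥0∞) := by
    funext v
    rw [show ((((∏ i, gaussianPDFReal m V (v i)).toNNReal : ℝ≥0)) : ℝ≥0∞)
        = ENNReal.ofReal (∏ i, gaussianPDFReal m V (v i)) from rfl]
    exact (ENNReal.ofReal_prod_of_nonneg fun i _ => gaussianPDFReal_nonneg m V (v i)).symm
  rw [hde, integral_withDensity_eq_integral_smul hd]
  refine integral_congr_ae (Filter.Eventually.of_forall fun v => ?_)
  show _ • _ = _
  rw [NNReal.smul_def, smul_eq_mul, Real.coe_toNNReal _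
    (Finset.prod_nonneg fun i _ => gaussianPDFReal_nonneg m V (v i))]

lemma hasDerivAt_gaussianPDFReal (V : ℝ≥0) (hV : V ≠ 0) (t : ℝ) :
    HasDerivAt (gaussianPDFReal 0 V) (-(t / V) * gaussianPDFReal 0 V t) t := by
  have hVpos : (0:ℝ) < V := by positivity
  have h1 : HasDerivAt (fun u : ℝ => -(u - 0)^2 / (2 * V)) (-(t / V)) t := by
    have := (((hasDerivAt_id t).sub_const 0).pow 2).neg.div_const (2 * (V:ℝ))
    refine this.congr_deriv ?_
    field_simp
    simp
  have h2 := (h1.exp).const_mul (Real.sqrt (2 * π * V))⁻¹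
  simp only [gaussianPDFReal]
  refine h2.congr_deriv ?_
  ring

lemma hasFDerivAt_gaussPhi {D : ℕ} (V : ℝ≥0) (hV : V ≠ 0) (v : Fin D → ℝ) :
    HasFDerivAt (fun w : Fin D → ℝ => ∏ i, gaussianPDFReal 0 V (w i))
      (∑ j, (∏ k ∈ Finset.univ.erase j, gaussianPDFReal 0 V (v k)) •
        ((-(v j / V) * gaussianPDFReal 0 V (v j)) •
          (ContinuousLinearMap.proj j : (Fin D → ℝ) →L[ℝ] ℝ))) v :=
  HasFDerivAt.finset_prod (fun j _ =>
    (hasDerivAt_gaussianPDFReal V hV (v j)).comp_hasFDerivAt (f := fun w : Fin D → ℝ => w j) v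
      (ContinuousLinearMap.proj j : (Fin D → ℝ) →L[ℝ] ℝ).hasFDerivAt)

lemma fderiv_gaussPhi_apply {D : ℕ} (V : ℝ≥0) (hV : V ≠ 0) (v : Fin D → ℝ) (i : Fin D) :
    fderiv ℝ (fun w : Fin D → ℝ => ∏ i, gaussianPDFReal 0 V (w i)) v (Pi.single i 1)
      = -(v i / V) * ∏ j, gaussianPDFReal 0 V (v j) := by
  rw [(hasFDerivAt_gaussPhi V hV v).fderiv]
  rw [ContinuousLinearMap.sum_apply]
  rw [Finset.sum_eq_single i]
  · simp only [ContinuousLinearMap.smul_apply, ContinuousLinearMap.proj_apply,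
      Pi.single_eq_same, smul_eq_mul, mul_one]
    rw [← Finset.prod_erase_mul Finset.univ _ (Finset.mem_univ i)]
    ring
  · intro j _ hj
    simp [ContinuousLinearMap.smul_apply, ContinuousLinearMap.proj_apply,
      Pi.single_eq_of_ne hj]
  · intro h; exact absurd (Finset.mem_univ i) h

lemma integrable_gauss_poly_1d (V : ℝ≥0) (hV : V ≠ 0) (m : ℕ) :
    Integrable (fun t : ℝ => gaussianPDFReal 0 V t * (1 + |t|) ^ m) := by
  have hVpos : (0:ℝ) < V := by positivity
  have hb : (0:ℝ) < (2 * (V:ℝ))⁻¹ := by positivity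
  set c : ℝ := (Real.sqrt (2 * π * V))⁻¹ with hc
  have hc0 : 0 ≤ c := by positivity
  have g1 : Integrable (fun t : ℝ => Real.exp (-(2 * (V:ℝ))⁻¹ * t ^ 2)) :=
    integrable_exp_neg_mul_sq hb
  have g2 : Integrable (fun t : ℝ => |t| ^ m * Real.exp (-(2 * (V:ℝ))⁻¹ * t ^ 2)) := by
    have hm : (-1:ℝ) < (m:ℝ) := lt_of_lt_of_le (by norm_num) (Nat.cast_nonneg m)
    have := (integrable_rpow_mul_exp_neg_mul_sq hb hm).abs
    refine this.congr (Filter.Eventually.of_forall fun t => ?_)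
    show |t ^ (m:ℝ) * Real.exp (-(2 * (V:ℝ))⁻¹ * t ^ 2)| = _
    rw [abs_mul, abs_of_pos (Real.exp_pos _), Real.rpow_natCast, abs_pow]
  have hG : Integrable (fun t : ℝ => (c * 2 ^ m) *
      (Real.exp (-(2 * (V:ℝ))⁻¹ * t ^ 2) + |t| ^ m * Real.exp (-(2 * (V:ℝ))⁻¹ * t ^ 2))) :=
    (g1.add g2).const_mul _
  refine hG.mono' ?_ (Filter.Eventually.of_forall fun t => ?_)
  · exact ((measurable_gaussianPDFReal 0 V).mul
      ((measurable_const.add measurable_abs).pow_const m)).aestronglyMeasurable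
  · have hψ : gaussianPDFReal 0 V t = c * Real.exp (-(2 * (V:ℝ))⁻¹ * t ^ 2) := by
      rw [gaussianPDFReal]
      congr 1
      rw [sub_zero]
      ring_nf
    have hpow : (1 + |t|) ^ m ≤ 2 ^ m * (1 + |t| ^ m) := by
      calc (1 + |t|) ^ m ≤ (2 * max 1 |t|) ^ m := by
            refine pow_le_pow_left₀ (by positivity) ?_ m
            have h1 : (1:ℝ) ≤ max 1 |t| := le_max_left _ _
            have h2 : |t| ≤ max 1 |t| := le_max_right _ _
            linarith
        _ = 2 ^ m * (max 1 |t|) ^ m := by rw [mul_pow]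
        _ ≤ 2 ^ m * (1 + |t| ^ m) := by
            refine mul_le_mul_of_nonneg_left ?_ (by positivity)
            rcases le_total |t| 1 with h | h
            · calc (max 1 |t|) ^ m = 1 := by rw [max_eq_left h, one_pow]
                _ ≤ 1 + |t| ^ m := by linarith [pow_nonneg (abs_nonneg t) m]
            · calc (max 1 |t|) ^ m = |t| ^ m := by rw [max_eq_right h]
                _ ≤ 1 + |t| ^ m := by linarith
    have he : 0 < Real.exp (-(2 * (V:ℝ))⁻¹ * t ^ 2) := Real.exp_pos _
    have h0 : 0 ≤ gaussianPDFReal 0 V t * (1 + |t|) ^ m := by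
      have := gaussianPDFReal_nonneg 0 V t
      positivity
    rw [Real.norm_of_nonneg h0, hψ]
    calc c * Real.exp (-(2 * (V:ℝ))⁻¹ * t ^ 2) * (1 + |t|) ^ m
        ≤ c * Real.exp (-(2 * (V:ℝ))⁻¹ * t ^ 2) * (2 ^ m * (1 + |t| ^ m)) := by
          refine mul_le_mul_of_nonneg_left hpow (by positivity)
      _ = (c * 2 ^ m) * (Real.exp (-(2 * (V:ℝ))⁻¹ * t ^ 2)
            + |t| ^ m * Real.exp (-(2 * (V:ℝ))⁻¹ * t ^ 2)) := by ring

lemma integrable_gauss_poly {D : ℕ} (V : ℝ≥0) (hV : V ≠ 0) (m : ℕ) (C : ℝ)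
    (h : (Fin D → ℝ) → ℝ) (hmeas : AEStronglyMeasurable h volume)
    (hb : ∀ v, |h v| ≤ C * (1 + ‖v‖) ^ m) :
    Integrable (fun v : Fin D → ℝ =>
      (∏ i, gaussianPDFReal 0 V (v i)) * h v) volume := by
  have hC : 0 ≤ C := by
    have := (abs_nonneg (h 0)).trans (hb 0)
    simpa using this
  have hG : Integrable (fun v : Fin D → ℝ =>
      C * ∏ i, (gaussianPDFReal 0 V (v i) * (1 + |v i|) ^ m)) volume :=
    (Integrable.fintype_prod (f := fun _ : Fin D => fun t : ℝ =>
      gaussianPDFReal 0 V t * (1 + |t|) ^ m)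
      (fun _ => integrable_gauss_poly_1d V hV m)).const_mul C
  refine hG.mono' ?_ (Filter.Eventually.of_forall fun v => ?_)
  · exact ((Finset.measurable_prod Finset.univ fun i _ =>
      (measurable_gaussianPDFReal 0 V).comp (measurable_pi_apply i)).aestronglyMeasurable).mul
      hmeas
  · have hφ0 : 0 ≤ ∏ i, gaussianPDFReal 0 V (v i) :=
      Finset.prod_nonneg fun i _ => gaussianPDFReal_nonneg 0 V (v i)
    have hP1 : (1:ℝ) ≤ ∏ i, (1 + |v i|) := by
      calc (1:ℝ) = ∏ _i : Fin D, (1:ℝ) := by rw [Finset.prod_const_one]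
        _ ≤ ∏ i, (1 + |v i|) := Finset.prod_le_prod (fun _ _ => zero_le_one)
            (fun i _ => by linarith [abs_nonneg (v i)])
    have hnorm : 1 + ‖v‖ ≤ ∏ i, (1 + |v i|) := by
      have : ‖v‖ ≤ (∏ i, (1 + |v i|)) - 1 := by
        refine (pi_norm_le_iff_of_nonneg (by linarith)).2 fun i => ?_
        have herase : (1:ℝ) ≤ ∏ k ∈ Finset.univ.erase i, (1 + |v k|) := by
          calc (1:ℝ) = ∏ _k ∈ Finset.univ.erase i, (1:ℝ) := by rw [Finset.prod_const_one]
            _ ≤ _ := Finset.prod_le_prod (fun _ _ => zero_le_one)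
                (fun k _ => by linarith [abs_nonneg (v k)])
        have : 1 + |v i| ≤ ∏ k, (1 + |v k|) := by
          rw [← Finset.mul_prod_erase Finset.univ _ (Finset.mem_univ i)]
          exact le_mul_of_one_le_right (by positivity) herase
        rw [Real.norm_eq_abs]; linarith
      linarith
    have hpow : (1 + ‖v‖) ^ m ≤ ∏ i, (1 + |v i|) ^ m := by
      rw [Finset.prod_pow]
      exact pow_le_pow_left₀ (by positivity) hnorm m
    rw [Real.norm_eq_abs, abs_mul, abs_of_nonneg hφ0]
    calc (∏ i, gaussianPDFReal 0 V (v i)) * |h v|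
        ≤ (∏ i, gaussianPDFReal 0 V (v i)) * (C * (1 + ‖v‖) ^ m) :=
          mul_le_mul_of_nonneg_left (hb v) hφ0
      _ ≤ (∏ i, gaussianPDFReal 0 V (v i)) * (C * ∏ i, (1 + |v i|) ^ m) := by
          refine mul_le_mul_of_nonneg_left ?_ hφ0
          exact mul_le_mul_of_nonneg_left hpow hC
      _ = C * ∏ i, (gaussianPDFReal 0 V (v i) * (1 + |v i|) ^ m) := by
          rw [Finset.prod_mul_distrib]; ring

/-- **Gaussian integration by parts.** If `s : ℝ^D → ℝ^D` is a `C¹` vector field such that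
`s` and its Jacobian grow at most polynomially, and `v ~ N(0, σ²I)` with `σ > 0`, then
`E_v[div s(x + v)] = E_v[(vᵀ s(x + v)) / σ²]` for every `x`. -/
theorem gaussian_ibp_divergence {D : ℕ} (s : (Fin D → ℝ) → (Fin D → ℝ))
    (hs : ContDiff ℝ 1 s)
    (hgrow : ∃ C n, ∀ y : Fin D → ℝ, ‖s y‖ ≤ C * (1 + ‖y‖) ^ n)
    (hgrow' : ∃ C n, ∀ y : Fin D → ℝ, ‖fderiv ℝ s y‖ ≤ C * (1 + ‖y‖) ^ n)
    (σ : ℝ) (hσ : 0 < σ) (x : Fin D → ℝ) :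
    ∫ v, divg s (x + v) ∂(Measure.pi fun _ : Fin D => gaussianReal 0 (Real.toNNReal (σ ^ 2)))
      = ∫ v, (∑ i, v i * s (x + v) i) / σ ^ 2
          ∂(Measure.pi fun _ : Fin D => gaussianReal 0 (Real.toNNReal (σ ^ 2))) := by
  set V : ℝ≥0 := Real.toNNReal (σ ^ 2) with hVdef
  have hV : V ≠ 0 := by
    simp only [hVdef, ne_eq, Real.toNNReal_eq_zero, not_le]
    positivity
  have hVR : (V : ℝ) = σ ^ 2 := Real.coe_toNNReal _ (by positivity)
  obtain ⟨C, n, hC⟩ := hgrow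
  obtain ⟨C', n', hC'⟩ := hgrow'
  have hC0 : 0 ≤ C := by have := (norm_nonneg (s 0)).trans (hC 0); simpa using this
  have hC0' : 0 ≤ C' := by have := (norm_nonneg _).trans (hC' 0); simpa using this
  set K := C * (1 + ‖x‖) ^ n with hK
  set K' := C' * (1 + ‖x‖) ^ n' with hK'
  have hK0 : 0 ≤ K := by positivity
  have hK0' : 0 ≤ K' := by positivity
  have hmul : ∀ (v : Fin D → ℝ) (q : ℕ),
      (1 + ‖x + v‖) ^ q ≤ (1 + ‖x‖) ^ q * (1 + ‖v‖) ^ q := by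
    intro v q
    rw [← mul_pow]
    refine pow_le_pow_left₀ (by positivity) ?_ q
    have h1 := norm_add_le x v
    have hx := norm_nonneg x
    have hv := norm_nonneg v
    nlinarith
  have hKs : ∀ v, ‖s (x + v)‖ ≤ K * (1 + ‖v‖) ^ n := by
    intro v
    calc ‖s (x + v)‖ ≤ C * (1 + ‖x + v‖) ^ n := hC _
      _ ≤ C * ((1 + ‖x‖) ^ n * (1 + ‖v‖) ^ n) :=
          mul_le_mul_of_nonneg_left (hmul v n) hC0
      _ = K * (1 + ‖v‖) ^ n := by rw [hK]; ring
  have hKf : ∀ v, ‖fderiv ℝ s (x + v)‖ ≤ K' * (1 + ‖v‖) ^ n' := by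
    intro v
    calc ‖fderiv ℝ s (x + v)‖ ≤ C' * (1 + ‖x + v‖) ^ n' := hC' _
      _ ≤ C' * ((1 + ‖x‖) ^ n' * (1 + ‖v‖) ^ n') :=
          mul_le_mul_of_nonneg_left (hmul v n') hC0'
      _ = K' * (1 + ‖v‖) ^ n' := by rw [hK']; ring
  set φ : (Fin D → ℝ) → ℝ := fun v => ∏ i, gaussianPDFReal 0 V (v i) with hφ
  have hφdiff : Differentiable ℝ φ := fun v => (hasFDerivAt_gaussPhi V hV v).differentiableAt
  have hφderiv : ∀ (v : Fin D → ℝ) (i : Fin D),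
      fderiv ℝ φ v (Pi.single i 1) = -(v i / V) * φ v := fun v i =>
    fderiv_gaussPhi_apply V hV v i
  have hsdiff : Differentiable ℝ s := hs.differentiable one_ne_zero
  have hfcoord : ∀ (i : Fin D) (y : Fin D → ℝ), fderiv ℝ (fun z => s z i) y
      = (ContinuousLinearMap.proj i : (Fin D → ℝ) →L[ℝ] ℝ).comp (fderiv ℝ s y) := fun i y =>
    ((ContinuousLinearMap.proj i : (Fin D → ℝ) →L[ℝ] ℝ).hasFDerivAt.comp y
      (hsdiff y).hasFDerivAt).fderiv
  have hsingle : ∀ i : Fin D, ‖(Pi.single i 1 : Fin D → ℝ)‖ ≤ 1 := by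
    intro i
    refine (pi_norm_le_iff_of_nonneg zero_le_one).2 fun j => ?_
    rcases eq_or_ne j i with h | h
    · subst h; simp
    · simp [Pi.single_eq_of_ne h]
  have hDbound : ∀ (i : Fin D) (v : Fin D → ℝ),
      |fderiv ℝ (fun z => s z i) (x + v) (Pi.single i 1)| ≤ K' * (1 + ‖v‖) ^ n' := by
    intro i v
    rw [hfcoord]
    have h1 : |((fderiv ℝ s (x + v)) (Pi.single i 1)) i|
        ≤ ‖(fderiv ℝ s (x + v)) (Pi.single i 1)‖ := by
      have := norm_le_pi_norm ((fderiv ℝ s (x + v)) (Pi.single i 1)) i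
      rwa [Real.norm_eq_abs] at this
    have h2 : ‖(fderiv ℝ s (x + v)) (Pi.single i 1)‖
        ≤ ‖fderiv ℝ s (x + v)‖ * ‖(Pi.single i 1 : Fin D → ℝ)‖ :=
      ContinuousLinearMap.le_opNorm _ _
    have h3 : ‖fderiv ℝ s (x + v)‖ * ‖(Pi.single i 1 : Fin D → ℝ)‖
        ≤ ‖fderiv ℝ s (x + v)‖ * 1 :=
      mul_le_mul_of_nonneg_left (hsingle i) (norm_nonneg _)
    calc |((ContinuousLinearMap.proj i : (Fin D → ℝ) →L[ℝ] ℝ).comp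
          (fderiv ℝ s (x + v))) (Pi.single i 1)|
        = |((fderiv ℝ s (x + v)) (Pi.single i 1)) i| := rfl
      _ ≤ ‖fderiv ℝ s (x + v)‖ * 1 := (h1.trans h2).trans h3
      _ ≤ K' * (1 + ‖v‖) ^ n' := by rw [mul_one]; exact hKf v
  have hgd : ∀ (i : Fin D) (v : Fin D → ℝ),
      HasFDerivAt (fun w => s (x + w) i) (fderiv ℝ (fun z => s z i) (x + v)) v := by
    intro i v
    have h1 : HasFDerivAt (fun w : Fin D → ℝ => x + w)
        (ContinuousLinearMap.id ℝ (Fin D → ℝ)) v := (hasFDerivAt_id v).const_add x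
    have h2 := ((hsdiff (x + v)).hasFDerivAt.comp v h1)
    have h3 := (ContinuousLinearMap.proj i : (Fin D → ℝ) →L[ℝ] ℝ).hasFDerivAt.comp v h2
    refine h3.congr_fderiv ?_
    rw [hfcoord, ContinuousLinearMap.comp_id]
  have hcontf : Continuous fun v : Fin D → ℝ => fderiv ℝ s (x + v) :=
    (hs.continuous_fderiv one_ne_zero).comp (continuous_const.add continuous_id)
  have hmeasD : ∀ i : Fin D, AEStronglyMeasurable
      (fun v : Fin D → ℝ => fderiv ℝ (fun z => s z i) (x + v) (Pi.single i 1)) volume := by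
    intro i
    have hc : Continuous fun v : Fin D → ℝ =>
        ((fderiv ℝ s (x + v)) (Pi.single i 1)) i :=
      (continuous_apply i).comp (hcontf.clm_apply continuous_const)
    refine (hc.congr fun v => ?_).aestronglyMeasurable
    rw [hfcoord]
    rfl
  have hcontg : ∀ i : Fin D, Continuous fun v : Fin D → ℝ => s (x + v) i := fun i =>
    (continuous_apply i).comp (hs.continuous.comp (continuous_const.add continuous_id))
  -- integrability
  have I2 : ∀ i : Fin D, Integrable (fun v : Fin D → ℝ =>
      φ v * fderiv ℝ (fun z => s z i) (x + v) (Pi.single i 1)) volume := fun i =>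
    integrable_gauss_poly V hV n' K' _ (hmeasD i) (hDbound i)
  have hb3 : ∀ (i : Fin D) (v : Fin D → ℝ),
      |v i * s (x + v) i| ≤ K * (1 + ‖v‖) ^ (n + 1) := by
    intro i v
    have h1 : |v i| ≤ ‖v‖ := by
      have := norm_le_pi_norm v i; rwa [Real.norm_eq_abs] at this
    have h2 : |s (x + v) i| ≤ K * (1 + ‖v‖) ^ n := by
      have := (norm_le_pi_norm (s (x + v)) i).trans (hKs v)
      rwa [Real.norm_eq_abs] at this
    have h3 : (0:ℝ) ≤ 1 + ‖v‖ := by positivity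
    calc |v i * s (x + v) i| = |v i| * |s (x + v) i| := abs_mul _ _
      _ ≤ (1 + ‖v‖) * (K * (1 + ‖v‖) ^ n) := by
          refine mul_le_mul (by linarith [norm_nonneg v]) h2 (abs_nonneg _) h3
      _ = K * (1 + ‖v‖) ^ (n + 1) := by rw [pow_succ]; ring
  have I3 : ∀ i : Fin D, Integrable (fun v : Fin D → ℝ =>
      φ v * (v i * s (x + v) i / σ ^ 2)) volume := by
    intro i
    refine integrable_gauss_poly V hV (n + 1) (K / σ ^ 2) _ ?_ ?_
    · exact (((continuous_apply i).mul (hcontg i)).div_const _).aestronglyMeasurable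
    · intro v
      rw [abs_div, abs_of_pos (by positivity : (0:ℝ) < σ ^ 2), div_mul_eq_mul_div]
      exact div_le_div_of_nonneg_right (hb3 i v) (by positivity) |>.trans_eq rfl
  have I1' : ∀ i : Fin D, Integrable (fun v : Fin D → ℝ =>
      φ v * (-(v i / V) * s (x + v) i)) volume := by
    intro i
    refine integrable_gauss_poly V hV (n + 1) (K / σ ^ 2) _ ?_ ?_
    · exact ((((continuous_apply i).div_const _).neg.mul (hcontg i))).aestronglyMeasurable
    · intro v
      have : -(v i / (V:ℝ)) * s (x + v) i = -(v i * s (x + v) i / σ ^ 2) := by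
        rw [hVR]; ring
      rw [this, abs_neg, abs_div, abs_of_pos (by positivity : (0:ℝ) < σ ^ 2),
        div_mul_eq_mul_div]
      exact div_le_div_of_nonneg_right (hb3 i v) (by positivity) |>.trans_eq rfl
  have I1 : ∀ i : Fin D, Integrable (fun v : Fin D → ℝ =>
      φ v * s (x + v) i) volume := by
    intro i
    refine integrable_gauss_poly V hV n K _ (hcontg i).aestronglyMeasurable fun v => ?_
    have := (norm_le_pi_norm (s (x + v)) i).trans (hKs v)
    rwa [Real.norm_eq_abs] at this
  -- key identity per coordinate
  have key : ∀ i : Fin D,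
      ∫ v : Fin D → ℝ, φ v * fderiv ℝ (fun z => s z i) (x + v) (Pi.single i 1)
        = ∫ v : Fin D → ℝ, φ v * (v i * s (x + v) i / σ ^ 2) := by
    intro i
    have hf'g : Integrable (fun v : Fin D → ℝ =>
        fderiv ℝ φ v (Pi.single i 1) * s (x + v) i) volume := by
      refine (I1' i).congr (Filter.Eventually.of_forall fun v => ?_)
      simp only [hφderiv v i]; ring
    have hfg' : Integrable (fun v : Fin D → ℝ =>
        φ v * fderiv ℝ (fun w => s (x + w) i) v (Pi.single i 1)) volume := by
      refine (I2 i).congr (Filter.Eventually.of_forall fun v => ?_)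
      simp only [(hgd i v).fderiv]
    have hibp := integral_mul_fderiv_eq_neg_fderiv_mul_of_integrable (μ := volume)
      (f := φ) (g := fun w => s (x + w) i) (v := Pi.single i 1)
      hf'g hfg' (I1 i) (fun v _ => hφdiff v) (fun v _ => (hgd i v).differentiableAt)
    calc ∫ v : Fin D → ℝ, φ v * fderiv ℝ (fun z => s z i) (x + v) (Pi.single i 1)
        = ∫ v : Fin D → ℝ, φ v * fderiv ℝ (fun w => s (x + w) i) v (Pi.single i 1) := by
          refine integral_congr_ae (Filter.Eventually.of_forall fun v => ?_)
          simp only [(hgd i v).fderiv]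
      _ = - ∫ v : Fin D → ℝ, fderiv ℝ φ v (Pi.single i 1) * s (x + v) i := hibp
      _ = ∫ v : Fin D → ℝ, φ v * (v i * s (x + v) i / σ ^ 2) := by
          rw [← integral_neg]
          refine integral_congr_ae (Filter.Eventually.of_forall fun v => ?_)
          simp only [hφderiv v i, hVR]
          ring
  rw [integral_pi_gaussian 0 V hV, integral_pi_gaussian 0 V hV]
  show ∫ v : Fin D → ℝ, φ v * divg s (x + v)
      = ∫ v : Fin D → ℝ, φ v * ((∑ i, v i * s (x + v) i) / σ ^ 2)
  simp_rw [divg, Finset.sum_div, Finset.mul_sum]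
  rw [integral_finset_sum _ (fun i _ => I2 i), integral_finset_sum _ (fun i _ => I3 i)]
  exact Finset.sum_congr rfl fun i _ => key i
end

section
/- Let s : ℝ^D → ℝ^D be a continuously differentiable vector field with s and its Jacobian of at most polynomial growth, and v ~ N(0, σ²I) with σ > 0. Then E_v[div s(x + v)] = E_v[(v/σ)ᵀ (s(x + v) − s(x − v)) / (2σ)] for every x ∈ ℝ^D. -/
open MeasureTheory Real ProbabilityTheory Filter
open scoped ENNReal NNReal

lemma poly_exp_bound (b : ℝ) (hb : 0 < b) (n : ℕ) (t : ℝ) :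
    (1 + |t|) ^ n * rexp (-b * t ^ 2) ≤ rexp (n^2 / (2*b)) * rexp (-(b/2) * t ^ 2) := by
  have h1 : (1 + |t|) ^ n ≤ rexp (n * |t|) := by
    calc (1 + |t|) ^ n ≤ (rexp |t|) ^ n := by
          apply pow_le_pow_left₀ (by positivity)
          linarith [Real.add_one_le_exp |t|]
        _ = rexp (n * |t|) := by rw [← Real.exp_nat_mul]
  calc (1 + |t|) ^ n * rexp (-b * t ^ 2) ≤ rexp (n * |t|) * rexp (-b * t^2) := by
        apply mul_le_mul_of_nonneg_right h1 (exp_pos _).le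
    _ = rexp (n * |t| + -b * t^2) := by rw [← Real.exp_add]
    _ ≤ rexp ((n:ℝ)^2 / (2*b) + -(b/2) * t^2) := by
        apply Real.exp_le_exp.2
        have h2 : 2*b*((n:ℝ)*|t|) ≤ (n:ℝ)^2 + b^2*t^2 := by
          nlinarith [sq_nonneg ((n:ℝ) - b*|t|), sq_abs t]
        have hA : 2*b*((n:ℝ)^2/(2*b)) = (n:ℝ)^2 := by field_simp
        nlinarith [h2, hA, mul_pos hb hb]
    _ = rexp ((n:ℝ)^2 / (2*b)) * rexp (-(b/2) * t ^ 2) := by rw [Real.exp_add]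

lemma integrable_poly_mul_gauss {b : ℝ} (hb : 0 < b) (n : ℕ) :
    Integrable (fun t : ℝ => (1 + |t|) ^ n * rexp (-b * t ^ 2)) := by
  apply Integrable.mono' ((integrable_exp_neg_mul_sq (by linarith : (0:ℝ) < b/2)).const_mul
    (rexp ((n:ℝ)^2 / (2*b))))
  · exact (((continuous_const.add continuous_abs).pow n).mul
      (Real.continuous_exp.comp (continuous_const.mul (continuous_pow 2)))).aestronglyMeasurable
  · refine Filter.Eventually.of_forall fun t => ?_
    rw [Real.norm_eq_abs, abs_of_nonneg (by positivity)]
    exact poly_exp_bound b hb n t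

section OneD
variable {σ : ℝ}

lemma toNNReal_sq_ne_zero (hσ : 0 < σ) : Real.toNNReal (σ ^ 2) ≠ 0 := by
  simp [Real.toNNReal_eq_zero, not_le]; positivity

lemma coe_toNNReal_sq (hσ : 0 < σ) : ((Real.toNNReal (σ ^ 2)) : ℝ) = σ ^ 2 :=
  Real.coe_toNNReal _ (sq_nonneg σ)

lemma phi_eq (hσ : 0 < σ) (t : ℝ) :
    gaussianPDFReal 0 (Real.toNNReal (σ ^ 2)) t
      = (Real.sqrt (2 * π * σ ^ 2))⁻¹ * rexp (-(2 * σ ^ 2)⁻¹ * t ^ 2) := by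
  simp only [gaussianPDFReal, coe_toNNReal_sq hσ, sub_zero]
  rw [show -t^2/(2*σ^2) = -(2*σ^2)⁻¹*t^2 from by ring]

lemma gauss_density (hσ : 0 < σ) :
    gaussianReal 0 (Real.toNNReal (σ ^ 2))
      = volume.withDensity
          (fun t => ((gaussianPDFReal 0 (Real.toNNReal (σ ^ 2)) t).toNNReal : ℝ≥0∞)) := by
  rw [gaussianReal_of_var_ne_zero 0 (toNNReal_sq_ne_zero hσ)]
  rfl

lemma meas_pdf_toNNReal :
    Measurable (fun t => (gaussianPDFReal 0 (Real.toNNReal (σ ^ 2)) t).toNNReal) :=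
  (measurable_gaussianPDFReal _ _).real_toNNReal

lemma integrable_gauss_iff (hσ : 0 < σ) {g : ℝ → ℝ} :
    Integrable g (gaussianReal 0 (Real.toNNReal (σ ^ 2)))
      ↔ Integrable (fun t => gaussianPDFReal 0 (Real.toNNReal (σ ^ 2)) t * g t) volume := by
  rw [gauss_density hσ, integrable_withDensity_iff_integrable_smul meas_pdf_toNNReal]
  apply integrable_congr
  refine Filter.Eventually.of_forall fun t => ?_
  simp [NNReal.smul_def, Real.coe_toNNReal _ (gaussianPDFReal_nonneg 0 _ t)]

lemma integral_gauss (hσ : 0 < σ) (g : ℝ → ℝ) :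
    ∫ t, g t ∂(gaussianReal 0 (Real.toNNReal (σ ^ 2)))
      = ∫ t, gaussianPDFReal 0 (Real.toNNReal (σ ^ 2)) t * g t := by
  rw [gauss_density hσ, integral_withDensity_eq_integral_smul meas_pdf_toNNReal]
  congr 1; funext t
  simp [NNReal.smul_def, Real.coe_toNNReal _ (gaussianPDFReal_nonneg 0 _ t)]

lemma integrable_poly_gauss1d (hσ : 0 < σ) {g : ℝ → ℝ} (hg : Continuous g)
    {C : ℝ} {n : ℕ} (h : ∀ t, |g t| ≤ C * (1 + |t|) ^ n) :
    Integrable g (gaussianReal 0 (Real.toNNReal (σ ^ 2))) := by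
  have hC : 0 ≤ C := by have := (abs_nonneg (g 0)).trans (h 0); simpa using this
  rw [integrable_gauss_iff hσ]
  have hb : (0:ℝ) < (2 * σ ^ 2)⁻¹ := by positivity
  apply Integrable.mono' (((integrable_poly_mul_gauss hb n).const_mul
    (C * (Real.sqrt (2 * π * σ ^ 2))⁻¹)))
  · exact ((measurable_gaussianPDFReal _ _).mul hg.measurable).aestronglyMeasurable
  · refine Filter.Eventually.of_forall fun t => ?_
    rw [Real.norm_eq_abs, abs_mul, abs_of_nonneg (gaussianPDFReal_nonneg 0 _ t), phi_eq hσ]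
    have h1 : (Real.sqrt (2 * π * σ ^ 2))⁻¹ * rexp (-(2 * σ ^ 2)⁻¹ * t ^ 2) * |g t|
        ≤ (Real.sqrt (2 * π * σ ^ 2))⁻¹ * rexp (-(2 * σ ^ 2)⁻¹ * t ^ 2) * (C * (1 + |t|) ^ n) := by
      apply mul_le_mul_of_nonneg_left (h t) (by positivity)
    refine h1.trans (le_of_eq ?_)
    ring

lemma pdf_hasDeriv (hσ : 0 < σ) (t : ℝ) :
    HasDerivAt (gaussianPDFReal 0 (Real.toNNReal (σ ^ 2)))
      (-(t / σ ^ 2) * gaussianPDFReal 0 (Real.toNNReal (σ ^ 2)) t) t := by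
  have hfun : gaussianPDFReal 0 (Real.toNNReal (σ ^ 2))
      = fun u => (Real.sqrt (2 * π * σ ^ 2))⁻¹ * rexp (-(2 * σ ^ 2)⁻¹ * u ^ 2) :=
    funext (phi_eq hσ)
  rw [hfun]
  have hinner : HasDerivAt (fun u : ℝ => -(2 * σ ^ 2)⁻¹ * u ^ 2)
      (-(2 * σ ^ 2)⁻¹ * (2 * t)) t := by
    refine ((hasDerivAt_pow 2 t).const_mul (-(2 * σ ^ 2)⁻¹)).congr_deriv ?_
    norm_num
  have := ((hinner.exp).const_mul ((Real.sqrt (2 * π * σ ^ 2))⁻¹))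
  refine this.congr_deriv ?_
  have hσ2 : σ ^ 2 ≠ 0 := by positivity
  field_simp

lemma ibp_1d (hσ : 0 < σ) {g : ℝ → ℝ} (hg : ContDiff ℝ 1 g)
    {C : ℝ} {n : ℕ} (hb : ∀ t, |g t| ≤ C * (1 + |t|) ^ n)
    (hb' : ∀ t, |deriv g t| ≤ C * (1 + |t|) ^ n) :
    ∫ t, deriv g t ∂(gaussianReal 0 (Real.toNNReal (σ ^ 2)))
      = ∫ t, t * g t / σ ^ 2 ∂(gaussianReal 0 (Real.toNNReal (σ ^ 2))) := by
  have hC : 0 ≤ C := by have := (abs_nonneg (g 0)).trans (hb 0); simpa using this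
  set φ := gaussianPDFReal 0 (Real.toNNReal (σ ^ 2)) with hφ
  have hgd : Differentiable ℝ g := hg.differentiable one_ne_zero
  have hgc : Continuous g := hg.continuous
  have hgc' : Continuous (deriv g) := hg.continuous_deriv le_rfl
  -- F = g * φ
  have hF : ∀ t, HasDerivAt (fun u => g u * φ u)
      (deriv g t * φ t - t * g t / σ ^ 2 * φ t) t := by
    intro t
    have := ((hgd t).hasDerivAt).mul (pdf_hasDeriv hσ t)
    refine this.congr_deriv ?_
    field_simp
    ring
  have hint1 : Integrable (fun t => φ t * deriv g t) volume := by
    rw [← integrable_gauss_iff hσ]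
    exact integrable_poly_gauss1d hσ hgc' hb'
  have hint2 : Integrable (fun t => φ t * (t * g t / σ ^ 2)) volume := by
    rw [← integrable_gauss_iff hσ]
    apply integrable_poly_gauss1d hσ (by continuity)
      (C := C / σ ^ 2) (n := n + 1)
    intro t
    rw [abs_div, abs_mul, abs_of_pos (show (0:ℝ) < σ^2 by positivity)]
    have h2 : |t| * |g t| ≤ C * (1 + |t|) ^ (n+1) := by
      calc |t| * |g t| ≤ (1 + |t|) * (C * (1 + |t|) ^ n) :=
            mul_le_mul (by linarith [abs_nonneg t]) (hb t) (abs_nonneg _) (by positivity)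
        _ = C * (1 + |t|) ^ (n+1) := by rw [pow_succ]; ring
    rw [show C / σ^2 * (1 + |t|) ^ (n+1) = (C * (1 + |t|) ^ (n+1)) / σ^2 from by ring]
    exact div_le_div_of_nonneg_right h2 (by positivity) |>.trans_eq rfl
  have hintF : Integrable (fun t => g t * φ t) volume := by
    have := (integrable_gauss_iff hσ (g := g)).1 (integrable_poly_gauss1d hσ hgc hb)
    apply this.congr
    exact Filter.Eventually.of_forall fun t => by ring
  have hintF' : Integrable (fun t => deriv g t * φ t - t * g t / σ ^ 2 * φ t) volume := by
    apply Integrable.sub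
    · exact hint1.congr (Filter.Eventually.of_forall fun t => by ring)
    · exact hint2.congr (Filter.Eventually.of_forall fun t => by ring)
  have hzero : ∫ t, (deriv g t * φ t - t * g t / σ ^ 2 * φ t) = 0 :=
    integral_eq_zero_of_hasDerivAt_of_integrable hF hintF' hintF
  rw [integral_sub (hint1.congr (Filter.Eventually.of_forall fun t => by ring))
    (hint2.congr (Filter.Eventually.of_forall fun t => by ring))] at hzero
  rw [integral_gauss hσ, integral_gauss hσ]
  have e1 : ∫ t, φ t * deriv g t = ∫ t, deriv g t * φ t := by congr 1; funext t; ring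
  have e2 : ∫ t, φ t * (t * g t / σ ^ 2) = ∫ t, t * g t / σ ^ 2 * φ t := by
    congr 1; funext t; ring
  rw [e1, e2]
  linarith

end OneD

section MultiD
variable {σ : ℝ}

lemma integrable_fin_nat_prod' {n : ℕ} {μ : Fin n → Measure ℝ} [∀ i, SigmaFinite (μ i)]
    {f : (i : Fin n) → ℝ → ℝ} (hf : ∀ i, Integrable (f i) (μ i)) :
    Integrable (fun x : Fin n → ℝ => ∏ i, f i (x i)) (Measure.pi μ) := by
  induction n with
  | zero =>
      simp only [Finset.univ_eq_empty, Finset.prod_empty]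
      rw [integrable_const_iff]
      right
      constructor
      rw [Measure.pi_univ]
      simp
  | succ m ih =>
      have A := (measurePreserving_piFinSuccAbove μ 0).symm
      rw [← A.integrable_comp_emb (MeasurableEquiv.measurableEmbedding _)]
      simp_rw [MeasurableEquiv.piFinSuccAbove_symm_apply, Fin.insertNthEquiv,
        Fin.prod_univ_succ, Fin.insertNth_zero]
      simp only [Fin.zero_succAbove, Function.comp_def, Fin.cons_zero, Fin.cons_succ,
        Equiv.coe_fn_mk]
      have h2 : Integrable (fun x : Fin m → ℝ => ∏ j, f (Fin.succ j) (x j))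
          (Measure.pi fun j => μ (Fin.succ j)) := ih (fun i => hf _)
      exact Integrable.mul_prod (hf 0) h2

lemma one_add_norm_le_prod {D : ℕ} (v : Fin D → ℝ) :
    (1 + ‖v‖) ≤ ∏ i, (1 + |v i|) := by
  have h1 : ∀ i, (1:ℝ) ≤ 1 + |v i| := fun i => by linarith [abs_nonneg (v i)]
  have hP : (1:ℝ) ≤ ∏ i, (1 + |v i|) := by
    calc (1:ℝ) = ∏ _i : Fin D, (1:ℝ) := by simp
      _ ≤ ∏ i, (1 + |v i|) :=
          Finset.prod_le_prod (fun i _ => zero_le_one) (fun i _ => h1 i)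
  have h2 : ‖v‖ ≤ (∏ i, (1 + |v i|)) - 1 := by
    apply (pi_norm_le_iff_of_nonneg (by linarith)).2
    intro i
    have hrest : (1:ℝ) ≤ ∏ j ∈ Finset.univ.erase i, (1 + |v j|) := by
      calc (1:ℝ) = ∏ _j ∈ Finset.univ.erase i, (1:ℝ) := by simp
        _ ≤ ∏ j ∈ Finset.univ.erase i, (1 + |v j|) :=
            Finset.prod_le_prod (fun j _ => zero_le_one) (fun j _ => h1 j)
    have hsingle : 1 + |v i| ≤ ∏ j, (1 + |v j|) := by
      rw [← Finset.mul_prod_erase Finset.univ _ (Finset.mem_univ i)]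
      exact le_mul_of_one_le_right (by linarith [abs_nonneg (v i)]) hrest
    rw [Real.norm_eq_abs]
    linarith
  linarith

lemma integrable_pi_gauss {D : ℕ} (hσ : 0 < σ) {F : (Fin D → ℝ) → ℝ} (hF : Continuous F)
    {C : ℝ} {n : ℕ} (h : ∀ v, |F v| ≤ C * (1 + ‖v‖) ^ n) :
    Integrable F (Measure.pi fun _ : Fin D => gaussianReal 0 (Real.toNNReal (σ ^ 2))) := by
  have hC : 0 ≤ C := by have := (abs_nonneg (F 0)).trans (h 0); simpa using this
  have hone : ∀ i : Fin D, Integrable (fun t : ℝ => (1 + |t|) ^ n)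
      (gaussianReal 0 (Real.toNNReal (σ ^ 2))) := by
    intro i
    apply integrable_poly_gauss1d hσ (by continuity) (C := 1) (n := n)
    intro t
    rw [one_mul, abs_of_nonneg (by positivity)]
  have hprod : Integrable (fun v : Fin D → ℝ => ∏ i, (1 + |v i|) ^ n)
      (Measure.pi fun _ : Fin D => gaussianReal 0 (Real.toNNReal (σ ^ 2))) :=
    integrable_fin_nat_prod' (fun i => hone i)
  apply (hprod.const_mul C).mono' hF.aestronglyMeasurable
  refine Filter.Eventually.of_forall fun v => ?_
  rw [Real.norm_eq_abs]
  calc |F v| ≤ C * (1 + ‖v‖) ^ n := h v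
    _ ≤ C * (∏ i, (1 + |v i|)) ^ n := by
        apply mul_le_mul_of_nonneg_left _ hC
        exact pow_le_pow_left₀ (by positivity) (one_add_norm_le_prod v) n
    _ = C * ∏ i, (1 + |v i|) ^ n := by rw [← Finset.prod_pow]

lemma neg_measurePreserving_gauss (hσ : 0 < σ) :
    MeasurePreserving (fun t : ℝ => -t) (gaussianReal 0 (Real.toNNReal (σ ^ 2)))
      (gaussianReal 0 (Real.toNNReal (σ ^ 2))) := by
  constructor
  · exact measurable_neg
  · have h := gaussianReal_map_const_mul (μ := 0) (v := Real.toNNReal (σ ^ 2)) (-1)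
    have h2 : (fun t : ℝ => -t) = ((-1 : ℝ) * ·) := by funext t; simp
    rw [h2, h]
    congr 1
    · norm_num
    · ext
      push_cast
      norm_num

lemma neg_measurePreserving_pi {D : ℕ} (hσ : 0 < σ) :
    MeasurePreserving (fun v : Fin D → ℝ => -v)
      (Measure.pi fun _ : Fin D => gaussianReal 0 (Real.toNNReal (σ ^ 2)))
      (Measure.pi fun _ : Fin D => gaussianReal 0 (Real.toNNReal (σ ^ 2))) := by
  have := measurePreserving_pi (fun _ : Fin D => gaussianReal 0 (Real.toNNReal (σ ^ 2)))
    (fun _ : Fin D => gaussianReal 0 (Real.toNNReal (σ ^ 2)))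
    (f := fun _ : Fin D => fun t : ℝ => -t) (fun i => neg_measurePreserving_gauss hσ)
  convert this using 1
  funext v; rfl

lemma integral_neg_pi {D : ℕ} (hσ : 0 < σ) (f : (Fin D → ℝ) → ℝ)
    (hf : AEStronglyMeasurable f
      (Measure.pi fun _ : Fin D => gaussianReal 0 (Real.toNNReal (σ ^ 2)))) :
    ∫ v, f (-v) ∂(Measure.pi fun _ : Fin D => gaussianReal 0 (Real.toNNReal (σ ^ 2)))
      = ∫ v, f v ∂(Measure.pi fun _ : Fin D => gaussianReal 0 (Real.toNNReal (σ ^ 2))) := by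
  conv_rhs => rw [← (neg_measurePreserving_pi (D := D) hσ).map_eq]
  rw [integral_map (neg_measurePreserving_pi (D := D) hσ).measurable.aemeasurable]
  rwa [(neg_measurePreserving_pi (D := D) hσ).map_eq]

end MultiD

section Coord
variable {σ : ℝ}

lemma norm_single_le {D : ℕ} (i : Fin D) : ‖(Pi.single i 1 : Fin D → ℝ)‖ ≤ 1 := by
  apply (pi_norm_le_iff_of_nonneg zero_le_one).2
  intro j
  rcases eq_or_ne j i with rfl | h
  · simp
  · simp [Pi.single_eq_of_ne h]

lemma line_eq {D : ℕ} (i : Fin (D + 1)) (w : Fin D → ℝ) (t : ℝ) :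
    Fin.insertNth (α := fun _ => ℝ) i t w
      = Fin.insertNth (α := fun _ => ℝ) i 0 w + t • (Pi.single i 1 : Fin (D+1) → ℝ) := by
  funext j
  rcases eq_or_ne j i with rfl | h
  · simp [Fin.insertNth_apply_same]
  · obtain ⟨k, rfl⟩ := Fin.exists_succAbove_eq h
    simp [Fin.insertNth_apply_succAbove, Pi.single_eq_of_ne (Fin.succAbove_ne i k)]

lemma ibp_coord {D : ℕ} (hσ : 0 < σ) (f : (Fin D → ℝ) → ℝ) (hf : ContDiff ℝ 1 f) (i : Fin D)
    {C : ℝ} {n : ℕ} (hb : ∀ y, |f y| ≤ C * (1 + ‖y‖) ^ n)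
    (hb' : ∀ y, |fderiv ℝ f y (Pi.single i 1)| ≤ C * (1 + ‖y‖) ^ n) :
    ∫ v, fderiv ℝ f v (Pi.single i 1)
        ∂(Measure.pi fun _ : Fin D => gaussianReal 0 (Real.toNNReal (σ ^ 2)))
      = ∫ v, v i * f v / σ ^ 2
        ∂(Measure.pi fun _ : Fin D => gaussianReal 0 (Real.toNNReal (σ ^ 2))) := by
  have hC : 0 ≤ C := by have := (abs_nonneg (f 0)).trans (hb 0); simpa using this
  have hD := i.pos
  obtain ⟨m, rfl⟩ : ∃ m, D = m + 1 := ⟨D - 1, by omega⟩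
  set μ1 := gaussianReal 0 (Real.toNNReal (σ ^ 2)) with hμ1
  have hcont1 : Continuous fun v : Fin (m+1) → ℝ => fderiv ℝ f v (Pi.single i 1) :=
    (hf.continuous_fderiv one_ne_zero).clm_apply continuous_const
  have hint1 : Integrable (fun v : Fin (m+1) → ℝ => fderiv ℝ f v (Pi.single i 1))
      (Measure.pi fun _ => μ1) := integrable_pi_gauss hσ hcont1 hb'
  have hint2 : Integrable (fun v : Fin (m+1) → ℝ => v i * f v / σ ^ 2)
      (Measure.pi fun _ => μ1) := by
    apply integrable_pi_gauss hσ (((continuous_apply i).mul hf.continuous).div_const _)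
      (C := C / σ ^ 2) (n := n + 1)
    intro v
    rw [abs_div, Pi.mul_apply, abs_mul, abs_of_pos (show (0:ℝ) < σ ^ 2 by positivity)]
    have hvi : |v i| ≤ ‖v‖ := by
      rw [← Real.norm_eq_abs]; exact norm_le_pi_norm v i
    have h2 : |v i| * |f v| ≤ C * (1 + ‖v‖) ^ (n + 1) := by
      calc |v i| * |f v| ≤ (1 + ‖v‖) * (C * (1 + ‖v‖) ^ n) :=
            mul_le_mul (by linarith [norm_nonneg v]) (hb v) (abs_nonneg _) (by positivity)
        _ = C * (1 + ‖v‖) ^ (n + 1) := by rw [pow_succ]; ring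
    rw [show C / σ ^ 2 * (1 + ‖v‖) ^ (n + 1) = (C * (1 + ‖v‖) ^ (n + 1)) / σ ^ 2 from by ring]
    exact div_le_div_of_nonneg_right h2 (by positivity) |>.trans_eq rfl
  set e := MeasurableEquiv.piFinSuccAbove (fun _ : Fin (m+1) => ℝ) i with he
  have mp := measurePreserving_piFinSuccAbove (fun _ : Fin (m+1) => μ1) i
  have mps := mp.symm e
  have key : ∀ G : (Fin (m+1) → ℝ) → ℝ, Integrable G (Measure.pi fun _ => μ1) →
      ∫ v, G v ∂(Measure.pi fun _ => μ1)
        = ∫ w, (∫ t, G (i.insertNth t w) ∂μ1) ∂(Measure.pi fun _ : Fin m => μ1) := by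
    intro G hG
    rw [← mps.integral_comp' G]
    have hGi : Integrable (G ∘ e.symm) (μ1.prod (Measure.pi fun _ : Fin m => μ1)) :=
      (mps.integrable_comp_emb e.symm.measurableEmbedding).2 hG
    rw [show (fun z : ℝ × (Fin m → ℝ) => G (e.symm z)) = G ∘ e.symm from rfl]
    rw [integral_prod_symm _ hGi]
    refine integral_congr_ae (Filter.Eventually.of_forall fun w => ?_)
    refine integral_congr_ae (Filter.Eventually.of_forall fun t => ?_)
    simp only [he, MeasurableEquiv.piFinSuccAbove_symm_apply, Function.comp]
    rfl
  rw [key _ hint1, key _ hint2]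
  congr 1
  funext w
  set y0 : Fin (m+1) → ℝ := Fin.insertNth (α := fun _ => ℝ) i 0 w with hy0
  set h := (Pi.single i 1 : Fin (m+1) → ℝ) with hh
  set g : ℝ → ℝ := fun t => f (y0 + t • h) with hg
  have hgC1 : ContDiff ℝ 1 g :=
    hf.comp (contDiff_const.add (contDiff_id.smul contDiff_const))
  have hline : ∀ t : ℝ, HasDerivAt (fun t : ℝ => y0 + t • h) h t := by
    intro t
    have := ((hasDerivAt_id t).smul_const h).const_add y0
    simpa using this
  have hderiv : ∀ t, deriv g t = fderiv ℝ f (y0 + t • h) h := by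
    intro t
    exact (((hf.differentiable one_ne_zero _).hasFDerivAt).comp_hasDerivAt t (hline t)).deriv
  have hyb : ∀ t : ℝ, (1 + ‖y0 + t • h‖) ≤ (1 + ‖y0‖) * (1 + |t|) := by
    intro t
    have h1 : ‖y0 + t • h‖ ≤ ‖y0‖ + |t| := by
      refine (norm_add_le _ _).trans ?_
      have h2 : ‖t • h‖ ≤ |t| := by
        rw [norm_smul, Real.norm_eq_abs]
        exact mul_le_of_le_one_right (abs_nonneg t) (norm_single_le i)
      linarith
    nlinarith [norm_nonneg y0, abs_nonneg t]
  have hpow : ∀ t : ℝ, C * (1 + ‖y0 + t • h‖) ^ n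
      ≤ (C * (1 + ‖y0‖) ^ n) * (1 + |t|) ^ n := by
    intro t
    rw [show (C * (1 + ‖y0‖) ^ n) * (1 + |t|) ^ n = C * ((1 + ‖y0‖) * (1 + |t|)) ^ n from by
      rw [mul_pow]; ring]
    exact mul_le_mul_of_nonneg_left (pow_le_pow_left₀ (by positivity) (hyb t) n) hC
  have hgb : ∀ t, |g t| ≤ (C * (1 + ‖y0‖) ^ n) * (1 + |t|) ^ n :=
    fun t => (hb _).trans (hpow t)
  have hgb' : ∀ t, |deriv g t| ≤ (C * (1 + ‖y0‖) ^ n) * (1 + |t|) ^ n := by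
    intro t
    rw [hderiv t]
    exact (hb' _).trans (hpow t)
  have h1d := ibp_1d hσ hgC1 hgb hgb'
  calc ∫ t, fderiv ℝ f (i.insertNth t w) (Pi.single i 1) ∂μ1
      = ∫ t, deriv g t ∂μ1 := by
        congr 1; funext t; rw [hderiv t, hy0, hh, ← line_eq]
    _ = ∫ t, t * g t / σ ^ 2 ∂μ1 := h1d
    _ = ∫ t, (Fin.insertNth (α := fun _ => ℝ) i t w) i * f (i.insertNth t w) / σ ^ 2 ∂μ1 := by
        congr 1; funext t
        have h5 : Fin.insertNth (α := fun _ => ℝ) i t w i = t :=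
          Fin.insertNth_apply_same (α := fun _ => ℝ) i t w
        simp only [hg, hy0, hh, ← line_eq, h5]

end Coord

section Helper
variable {σ : ℝ}

lemma integrable_mul_coord {D : ℕ} (hσ : 0 < σ) (i : Fin D) {F : (Fin D → ℝ) → ℝ}
    (hFc : Continuous F) {C : ℝ} {n : ℕ} (h : ∀ v, |F v| ≤ C * (1 + ‖v‖) ^ n) :
    Integrable (fun v : Fin D → ℝ => v i * F v / σ ^ 2)
      (Measure.pi fun _ : Fin D => gaussianReal 0 (Real.toNNReal (σ ^ 2))) := by
  have hC : 0 ≤ C := by have := (abs_nonneg (F 0)).trans (h 0); simpa using this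
  apply integrable_pi_gauss hσ (((continuous_apply i).mul hFc).div_const _)
    (C := C / σ ^ 2) (n := n + 1)
  intro v
  rw [abs_div, Pi.mul_apply, abs_mul, abs_of_pos (show (0:ℝ) < σ ^ 2 by positivity)]
  have hvi : |v i| ≤ ‖v‖ := by
    rw [← Real.norm_eq_abs]; exact norm_le_pi_norm v i
  have h2 : |v i| * |F v| ≤ C * (1 + ‖v‖) ^ (n + 1) := by
    calc |v i| * |F v| ≤ (1 + ‖v‖) * (C * (1 + ‖v‖) ^ n) :=
          mul_le_mul (by linarith [norm_nonneg v]) (h v) (abs_nonneg _) (by positivity)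
      _ = C * (1 + ‖v‖) ^ (n + 1) := by rw [pow_succ]; ring
  rw [show C / σ ^ 2 * (1 + ‖v‖) ^ (n + 1) = (C * (1 + ‖v‖) ^ (n + 1)) / σ ^ 2 from by ring]
  exact div_le_div_of_nonneg_right h2 (by positivity)

end Helper

/-- **Symmetrized Gaussian integration by parts.** If `s : ℝ^D → ℝ^D` is a `C¹` vector field
with `s` and its Jacobian of at most polynomial growth, and `v ~ N(0, σ²I)` with `σ > 0`, then
`E_v[div s(x + v)] = E_v[(v/σ)ᵀ (s(x + v) − s(x − v)) / (2σ)]` for every `x`. -/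
theorem gaussian_ibp_divergence_symmetrized {D : ℕ} (s : (Fin D → ℝ) → (Fin D → ℝ))
    (hs : ContDiff ℝ 1 s)
    (hgrow : ∃ C n, ∀ y : Fin D → ℝ, ‖s y‖ ≤ C * (1 + ‖y‖) ^ n)
    (hgrow' : ∃ C n, ∀ y : Fin D → ℝ, ‖fderiv ℝ s y‖ ≤ C * (1 + ‖y‖) ^ n)
    (σ : ℝ) (hσ : 0 < σ) (x : Fin D → ℝ) :
    ∫ v, divg s (x + v) ∂(Measure.pi fun _ : Fin D => gaussianReal 0 (Real.toNNReal (σ ^ 2)))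
      = ∫ v, ∑ i, (v i / σ) * ((s (x + v) i - s (x - v) i) / (2 * σ))
          ∂(Measure.pi fun _ : Fin D => gaussianReal 0 (Real.toNNReal (σ ^ 2))) := by
  obtain ⟨C1, n1, hg1⟩ := hgrow
  obtain ⟨C2, n2, hg2⟩ := hgrow'
  set K := max C1 C2 with hKdef
  set N := max n1 n2 with hNdef
  have hC1 : 0 ≤ C1 := by have := (norm_nonneg (s 0)).trans (hg1 0); simpa using this
  have hK : 0 ≤ K := le_trans hC1 (le_max_left _ _)
  have hone : ∀ y : Fin D → ℝ, (1:ℝ) ≤ 1 + ‖y‖ := fun y => by linarith [norm_nonneg y]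
  have hKs : ∀ y, ‖s y‖ ≤ K * (1 + ‖y‖) ^ N := fun y =>
    (hg1 y).trans (mul_le_mul (le_max_left _ _)
      (pow_le_pow_right₀ (hone y) (le_max_left _ _)) (by positivity) hK)
  have hKd : ∀ y, ‖fderiv ℝ s y‖ ≤ K * (1 + ‖y‖) ^ N := fun y =>
    (hg2 y).trans (mul_le_mul (le_max_right _ _)
      (pow_le_pow_right₀ (hone y) (le_max_right _ _)) (by positivity) hK)
  set μD := Measure.pi fun _ : Fin D => gaussianReal 0 (Real.toNNReal (σ ^ 2)) with hμD
  set K' := K * (1 + ‖x‖) ^ N with hK'def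
  have hK'0 : 0 ≤ K' := by positivity
  have hpowp : ∀ v : Fin D → ℝ, K * (1 + ‖x + v‖) ^ N ≤ K' * (1 + ‖v‖) ^ N := by
    intro v
    have h1 : (1 + ‖x + v‖) ≤ (1 + ‖x‖) * (1 + ‖v‖) := by
      have := norm_add_le x v
      nlinarith [norm_nonneg x, norm_nonneg v]
    calc K * (1 + ‖x + v‖) ^ N ≤ K * ((1 + ‖x‖) * (1 + ‖v‖)) ^ N :=
          mul_le_mul_of_nonneg_left (pow_le_pow_left₀ (by positivity) h1 N) hK
      _ = K' * (1 + ‖v‖) ^ N := by rw [hK'def, mul_pow]; ring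
  have hpowm : ∀ v : Fin D → ℝ, K * (1 + ‖x - v‖) ^ N ≤ K' * (1 + ‖v‖) ^ N := by
    intro v
    have h1 : (1 + ‖x - v‖) ≤ (1 + ‖x‖) * (1 + ‖v‖) := by
      have := norm_sub_le x v
      nlinarith [norm_nonneg x, norm_nonneg v]
    calc K * (1 + ‖x - v‖) ^ N ≤ K * ((1 + ‖x‖) * (1 + ‖v‖)) ^ N :=
          mul_le_mul_of_nonneg_left (pow_le_pow_left₀ (by positivity) h1 N) hK
      _ = K' * (1 + ‖v‖) ^ N := by rw [hK'def, mul_pow]; ring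
  have hsi : ∀ i : Fin D, ContDiff ℝ 1 (fun z => s z i) := fun i => contDiff_pi.mp hs i
  have hcomp : ∀ (i : Fin D) (y : Fin D → ℝ), fderiv ℝ (fun z => s z i) y
      = (ContinuousLinearMap.proj i).comp (fderiv ℝ s y) := by
    intro i y
    exact (((ContinuousLinearMap.proj i).hasFDerivAt).comp y
      (hs.differentiable one_ne_zero y).hasFDerivAt).fderiv
  have hDbound : ∀ (i : Fin D) (y : Fin D → ℝ),
      |fderiv ℝ (fun z => s z i) y (Pi.single i 1)| ≤ K * (1 + ‖y‖) ^ N := by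
    intro i y
    rw [hcomp i y]
    have h0 : ((ContinuousLinearMap.proj i).comp (fderiv ℝ s y)) (Pi.single i 1)
        = (fderiv ℝ s y (Pi.single i 1)) i := rfl
    rw [h0]
    calc |(fderiv ℝ s y (Pi.single i 1)) i| ≤ ‖fderiv ℝ s y (Pi.single i 1)‖ := by
          rw [← Real.norm_eq_abs]; exact norm_le_pi_norm _ i
      _ ≤ ‖fderiv ℝ s y‖ * ‖(Pi.single i 1 : Fin D → ℝ)‖ :=
          ContinuousLinearMap.le_opNorm _ _
      _ ≤ (K * (1 + ‖y‖) ^ N) * 1 :=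
          mul_le_mul (hKd y) (norm_single_le i) (norm_nonneg _) (by positivity)
      _ = K * (1 + ‖y‖) ^ N := mul_one _
  have hcontd : Continuous (fun y => fderiv ℝ s y) := hs.continuous_fderiv one_ne_zero
  have hconts : Continuous s := hs.continuous
  have hcontDi : ∀ i : Fin D, Continuous
      (fun v : Fin D → ℝ => fderiv ℝ (fun z => s z i) (x + v) (Pi.single i 1)) := by
    intro i
    have hfun : (fun v : Fin D → ℝ => fderiv ℝ (fun z => s z i) (x + v) (Pi.single i 1))
        = fun v => (fderiv ℝ s (x + v) (Pi.single i 1)) i := by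
      funext v; rw [hcomp i (x + v)]; rfl
    rw [hfun]
    exact (continuous_apply i).comp
      (((hcontd.comp (continuous_const.add continuous_id)).clm_apply continuous_const))
  have hcontp : ∀ i : Fin D, Continuous (fun v : Fin D → ℝ => s (x + v) i) := fun i =>
    (continuous_apply i).comp (hconts.comp (continuous_const.add continuous_id))
  have hcontm : ∀ i : Fin D, Continuous (fun v : Fin D → ℝ => s (x - v) i) := fun i =>
    (continuous_apply i).comp (hconts.comp (continuous_const.sub continuous_id))
  have hbp : ∀ (i : Fin D) (v : Fin D → ℝ), |s (x + v) i| ≤ K' * (1 + ‖v‖) ^ N := by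
    intro i v
    calc |s (x + v) i| ≤ ‖s (x + v)‖ := by
          rw [← Real.norm_eq_abs]; exact norm_le_pi_norm _ i
      _ ≤ K * (1 + ‖x + v‖) ^ N := hKs _
      _ ≤ K' * (1 + ‖v‖) ^ N := hpowp v
  have hbm : ∀ (i : Fin D) (v : Fin D → ℝ), |s (x - v) i| ≤ K' * (1 + ‖v‖) ^ N := by
    intro i v
    calc |s (x - v) i| ≤ ‖s (x - v)‖ := by
          rw [← Real.norm_eq_abs]; exact norm_le_pi_norm _ i
      _ ≤ K * (1 + ‖x - v‖) ^ N := hKs _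
      _ ≤ K' * (1 + ‖v‖) ^ N := hpowm v
  -- main per-coordinate statement
  have main : ∀ i : Fin D,
      Integrable (fun v : Fin D → ℝ => fderiv ℝ (fun z => s z i) (x + v) (Pi.single i 1)) μD
      ∧ Integrable (fun v : Fin D → ℝ =>
          (v i / σ) * ((s (x + v) i - s (x - v) i) / (2 * σ))) μD
      ∧ ∫ v, fderiv ℝ (fun z => s z i) (x + v) (Pi.single i 1) ∂μD
          = ∫ v, (v i / σ) * ((s (x + v) i - s (x - v) i) / (2 * σ)) ∂μD := by
    intro i
    set fp : (Fin D → ℝ) → ℝ := fun v => s (x + v) i with hfp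
    set fm : (Fin D → ℝ) → ℝ := fun v => s (x - v) i with hfm
    have hfpC : ContDiff ℝ 1 fp := (hsi i).comp (contDiff_const.add contDiff_id)
    have hfmC : ContDiff ℝ 1 fm := (hsi i).comp (contDiff_const.sub contDiff_id)
    have hfpd : ∀ v, fderiv ℝ fp v = fderiv ℝ (fun z => s z i) (x + v) := by
      intro v
      have h1 : HasFDerivAt (fun v : Fin D → ℝ => x + v)
          (ContinuousLinearMap.id ℝ (Fin D → ℝ)) v := (hasFDerivAt_id v).const_add x
      have h2 := (((hsi i).differentiable one_ne_zero) (x + v)).hasFDerivAt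
      have h3 : fderiv ℝ fp v = (fderiv ℝ (fun z => s z i) (x + v)).comp
          (ContinuousLinearMap.id ℝ (Fin D → ℝ)) := (h2.comp v h1).fderiv
      rw [h3, ContinuousLinearMap.comp_id]
    have hfmd : ∀ v, fderiv ℝ fm v = -(fderiv ℝ (fun z => s z i) (x - v)) := by
      intro v
      have h1 : HasFDerivAt (fun v : Fin D → ℝ => x - v)
          (-(ContinuousLinearMap.id ℝ (Fin D → ℝ))) v := (hasFDerivAt_id v).const_sub x
      have h2 := (((hsi i).differentiable one_ne_zero) (x - v)).hasFDerivAt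
      have h3 : fderiv ℝ fm v = (fderiv ℝ (fun z => s z i) (x - v)).comp
          (-(ContinuousLinearMap.id ℝ (Fin D → ℝ))) := (h2.comp v h1).fderiv
      rw [h3, ContinuousLinearMap.comp_neg, ContinuousLinearMap.comp_id]
    have hbp' : ∀ v, |fderiv ℝ fp v (Pi.single i 1)| ≤ K' * (1 + ‖v‖) ^ N := by
      intro v
      rw [hfpd v]
      exact (hDbound i _).trans (hpowp v)
    have hbm' : ∀ v, |fderiv ℝ fm v (Pi.single i 1)| ≤ K' * (1 + ‖v‖) ^ N := by
      intro v
      rw [hfmd v, ContinuousLinearMap.neg_apply, abs_neg]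
      exact (hDbound i _).trans (hpowm v)
    have e1 := ibp_coord hσ fp hfpC i (hbp i) hbp'
    have e2 := ibp_coord hσ fm hfmC i (hbm i) hbm'
    have e1' : ∫ v, fderiv ℝ (fun z => s z i) (x + v) (Pi.single i 1) ∂μD
        = ∫ v, v i * fp v / σ ^ 2 ∂μD := by
      rw [hμD, ← e1]
      congr 1; funext v; rw [hfpd v]
    have e2' : ∫ v, -(fderiv ℝ (fun z => s z i) (x - v) (Pi.single i 1)) ∂μD
        = ∫ v, v i * fm v / σ ^ 2 ∂μD := by
      rw [hμD, ← e2]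
      congr 1; funext v; rw [hfmd v, ContinuousLinearMap.neg_apply]
    have hsym : ∫ v, fderiv ℝ (fun z => s z i) (x - v) (Pi.single i 1) ∂μD
        = ∫ v, fderiv ℝ (fun z => s z i) (x + v) (Pi.single i 1) ∂μD := by
      have hmeas : AEStronglyMeasurable
          (fun v : Fin D → ℝ => fderiv ℝ (fun z => s z i) (x + v) (Pi.single i 1)) μD :=
        (hcontDi i).aestronglyMeasurable
      have h4 := integral_neg_pi (D := D) hσ
        (fun v => fderiv ℝ (fun z => s z i) (x + v) (Pi.single i 1)) (by rw [hμD] at hmeas; exact hmeas)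
      have h5 : (fun v : Fin D → ℝ => fderiv ℝ (fun z => s z i) (x - v) (Pi.single i 1))
          = fun v => fderiv ℝ (fun z => s z i) (x + -v) (Pi.single i 1) := by
        funext v; rw [show x + -v = x - v from by abel]
      rw [hμD, h5, ← h4]
    have hintLHS : Integrable
        (fun v : Fin D → ℝ => fderiv ℝ (fun z => s z i) (x + v) (Pi.single i 1)) μD := by
      rw [hμD]
      exact integrable_pi_gauss hσ (hcontDi i) (fun v => (hDbound i _).trans (hpowp v))
    have hintp : Integrable (fun v : Fin D → ℝ => v i * fp v / σ ^ 2) μD := by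
      rw [hμD]
      exact integrable_mul_coord hσ i (hcontp i) (hbp i)
    have hintm : Integrable (fun v : Fin D → ℝ => v i * fm v / σ ^ 2) μD := by
      rw [hμD]
      exact integrable_mul_coord hσ i (hcontm i) (hbm i)
    have hrw : (fun v : Fin D → ℝ => (v i / σ) * ((s (x + v) i - s (x - v) i) / (2 * σ)))
        = fun v => (v i * fp v / σ ^ 2) * (1/2) - (v i * fm v / σ ^ 2) * (1/2) := by
      funext v
      rw [hfp, hfm]
      have hσ0 : σ ≠ 0 := ne_of_gt hσ
      field_simp
    have hintRHS : Integrable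
        (fun v : Fin D → ℝ => (v i / σ) * ((s (x + v) i - s (x - v) i) / (2 * σ))) μD := by
      rw [hrw]
      exact (hintp.mul_const _).sub (hintm.mul_const _)
    refine ⟨hintLHS, hintRHS, ?_⟩
    have hneg : ∫ v, v i * fm v / σ ^ 2 ∂μD
        = - ∫ v, fderiv ℝ (fun z => s z i) (x + v) (Pi.single i 1) ∂μD := by
      rw [← e2', integral_neg, hsym]
    rw [hrw, integral_sub (hintp.mul_const _) (hintm.mul_const _),
      integral_mul_const, integral_mul_const, ← e1', hneg]
    ring
  simp only [divg]
  rw [hμD] at main ⊢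
  rw [integral_finset_sum _ (fun i _ => (main i).1),
    integral_finset_sum _ (fun i _ => (main i).2.1)]
  exact Finset.sum_congr rfl (fun i _ => (main i).2.2)
end
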